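/- Fix $n \ge 2$ and define, for $w \in S_n$ and $1 \le k \le n-1$, the integer $\sigma_k(w) := \sum_{i=1}^{k}(w(i) - i)$. If $w$ is of block form (there exist $0 = j_0 < j_1 < \cdots < j_m < j_{m+1} = n$ with $w(j_{r-1}+p) = j_r + 1 - p$ for $1 \le p \le j_r - j_{r-1}$), then for every $1 \le k \le n-1$: $\sigma_k(w)\left(\sigma_k(w) - \tfrac12 \sigma_{k-1}(w) - \tfrac12 \sigma_{k+1}(w) - 1\right) = 0$, where $\sigma_0(w) = \sigma_n(w) = 0$. -/

import Mathlib

theorem block_perm_quadratic_relation (n m : ℕ) (hn : 2 ≤ n)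
    (w : Equiv.Perm ℕ) (j : ℕ → ℕ)
    (hj0 : j 0 = 0) (hjtop : j (m + 1) = n)
    (hmono : ∀ r : ℕ, r ≤ m → j r < j (r + 1))
    (hjm : j m < n)
    (hblock : ∀ r : ℕ, r ≤ m → ∀ p : ℕ, 1 ≤ p → p ≤ j (r + 1) - j r →
      w (j r + p) = j (r + 1) + 1 - p)
    (σ : ℕ → ℚ)
    (hσ : ∀ k : ℕ, σ k = ∑ i ∈ Finset.Icc 1 k, ((w i : ℚ) - (i : ℚ))) :
    ∀ k : ℕ, 1 ≤ k → k ≤ n - 1 →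
      σ k * (σ k - σ (k - 1) / 2 - σ (k + 1) / 2 - 1) = 0 := by
  have hσ0 : σ 0 = 0 := by rw [hσ]; simp
  have hstep : ∀ r, r ≤ m → ∀ p, p ≤ j (r+1) - j r →
      σ (j r + p) = σ (j r) + p * ((j (r+1) : ℚ) - j r - p) := by
    intro r hr p hp
    induction p with
    | zero => simp
    | succ q ih =>
      have hq : q ≤ j (r+1) - j r := Nat.le_of_succ_le hp
      have h1 : σ (j r + (q+1)) = σ (j r + q) + ((w (j r + (q+1)) : ℚ) - ((j r + (q+1) : ℕ) : ℚ)) := by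
        rw [hσ (j r + (q+1)), hσ (j r + q)]
        rw [show j r + (q+1) = (j r + q) + 1 from rfl]
        rw [Finset.sum_Icc_succ_top (Nat.le_add_left 1 _)]
      have hw : w (j r + (q+1)) = j (r+1) + 1 - (q+1) :=
        hblock r hr (q+1) (Nat.succ_le_succ (Nat.zero_le q)) hp
      have hle : q + 1 ≤ j (r+1) + 1 := by
        have := hmono r hr; omega
      have hle2 : q ≤ j (r+1) := by omega
      rw [h1, ih hq, hw]
      push_cast [Nat.cast_sub hle, Nat.cast_sub hle2]
      ring
  have hzero : ∀ s, s ≤ m + 1 → σ (j s) = 0 := by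
    intro s hs
    induction s with
    | zero => rw [hj0]; exact hσ0
    | succ t ih =>
      have ht : t ≤ m := Nat.lt_succ_iff.mp hs
      have hmt := hmono t ht
      have h := hstep t ht (j (t+1) - j t) le_rfl
      rw [Nat.add_sub_cancel' (le_of_lt hmt)] at h
      rw [h, ih (Nat.le_succ_of_le ht), Nat.cast_sub (le_of_lt hmt)]
      ring
  intro k hk1 hk2
  have hkn : k < n := by omega
  set S := Finset.filter (fun r => j r < k) (Finset.range (m+2)) with hS
  have h0S : 0 ∈ S := by
    simp only [hS, Finset.mem_filter, Finset.mem_range, hj0]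
    omega
  have hne : S.Nonempty := ⟨0, h0S⟩
  set r := S.max' hne with hrdef
  have hrS : r ∈ S := Finset.max'_mem S hne
  have hrlt : j r < k := (Finset.mem_filter.mp hrS).2
  have hrm2 : r < m + 2 := Finset.mem_range.mp (Finset.mem_filter.mp hrS).1
  have hrm : r ≤ m := by
    by_contra h
    have : r = m + 1 := by omega
    rw [this, hjtop] at hrlt
    omega
  have hk_le : k ≤ j (r+1) := by
    by_contra h
    push_neg at h
    have : r + 1 ∈ S := by
      simp only [hS, Finset.mem_filter, Finset.mem_range]
      exact ⟨by omega, h⟩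
    have := Finset.le_max' S (r+1) this
    omega
  set p := k - j r with hpdef
  have hp1 : 1 ≤ p := by omega
  have hkp : k = j r + p := by omega
  have hpL : p ≤ j (r+1) - j r := by omega
  have hjr0 : σ (j r) = 0 := hzero r (by omega)
  by_cases hcase : p = j (r+1) - j r
  · -- k is a block boundary: σ k = 0
    have hk_eq : k = j (r+1) := by omega
    have : σ k = 0 := by rw [hk_eq]; exact hzero (r+1) (by omega)
    rw [this, zero_mul]
  · have hplt : p < j (r+1) - j r := lt_of_le_of_ne hpL hcase
    have hσk : σ k = p * ((j (r+1) : ℚ) - j r - p) := by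
      rw [hkp, hstep r hrm p hpL, hjr0, zero_add]
    have hσkm : σ (k-1) = (p-1 : ℕ) * ((j (r+1) : ℚ) - j r - (p-1 : ℕ)) := by
      rw [show k - 1 = j r + (p-1) by omega, hstep r hrm (p-1) (by omega), hjr0, zero_add]
    have hσkp : σ (k+1) = ((p:ℚ)+1) * ((j (r+1) : ℚ) - j r - ((p:ℚ)+1)) := by
      rw [show k + 1 = j r + (p+1) by omega, hstep r hrm (p+1) (by omega), hjr0, zero_add]
      push_cast
      ring
    rw [hσk, hσkm, hσkp]
    push_cast [Nat.cast_sub hp1]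
    ring
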